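/- Let s ≥ 1 and N ≥ 0 be integers and let x be a real number with 0 ≤ x ≤ 2^N. Then exp(x - x^{2s+1}/(2^{2Ns}·(2s+1)!) - x^{4s+2}/(2^{N(4s+1)-2}·((2s+1)!)²)) ≤ (Σ_{i=0}^{2s} (x/2^N)^i/i!)^{2^N} ≤ exp(x). -/

import Mathlib

open Finset

lemma exp_tail_bound (n : ℕ) {y : ℝ} (hy0 : 0 ≤ y) (hy1 : y ≤ 1) :
    Real.exp y ≤ (∑ i ∈ Finset.range n, y ^ i / (Nat.factorial i : ℝ))
      + (y ^ n / (Nat.factorial n : ℝ)) * Real.exp y := by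
  have hsum : Summable (fun i : ℕ => y ^ i / (Nat.factorial i : ℝ)) :=
    Real.summable_pow_div_factorial y
  have hexp : Real.exp y = ∑' i : ℕ, y ^ i / (Nat.factorial i : ℝ) := by
    rw [Real.exp_eq_exp_ℝ, NormedSpace.exp_eq_tsum_div]
  have hsplit := Summable.sum_add_tsum_nat_add n hsum
  have hterm : ∀ j : ℕ, y ^ (j + n) / (Nat.factorial (j + n) : ℝ)
      ≤ (y ^ n / (Nat.factorial n : ℝ)) * (y ^ j / (Nat.factorial j : ℝ)) := by
    intro j
    rw [div_mul_div_comm, ← pow_add, add_comm n j]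
    have hfac : ((Nat.factorial n : ℝ) * (Nat.factorial j : ℝ)) ≤ (Nat.factorial (j + n) : ℝ) := by
      exact_mod_cast Nat.le_of_dvd (Nat.factorial_pos _)
        (by rw [add_comm]; exact Nat.factorial_mul_factorial_dvd_factorial_add n j)
    gcongr
    all_goals positivity
  have htail : (∑' j : ℕ, y ^ (j + n) / (Nat.factorial (j + n) : ℝ))
      ≤ (y ^ n / (Nat.factorial n : ℝ)) * Real.exp y := by
    calc (∑' j : ℕ, y ^ (j + n) / (Nat.factorial (j + n) : ℝ))
        ≤ ∑' j : ℕ, (y ^ n / (Nat.factorial n : ℝ)) * (y ^ j / (Nat.factorial j : ℝ)) :=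
          Summable.tsum_le_tsum hterm ((summable_nat_add_iff n).2 hsum) (hsum.mul_left _)
      _ = (y ^ n / (Nat.factorial n : ℝ)) * Real.exp y := by rw [tsum_mul_left, hexp]
  calc Real.exp y = ∑ i ∈ Finset.range n, y ^ i / (Nat.factorial i : ℝ)
        + ∑' j : ℕ, y ^ (j + n) / (Nat.factorial (j + n) : ℝ) := by rw [hexp, ← hsplit]
    _ ≤ _ := by
        exact add_le_add_right htail (∑ i ∈ Finset.range n, y ^ i / (Nat.factorial i : ℝ))

theorem taylor_pow_approx_exp_nonneg (s N : ℕ) (hs : 1 ≤ s) (x : ℝ)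
    (hx0 : 0 ≤ x) (hx1 : x ≤ 2 ^ N) :
    Real.exp (x - x ^ (2 * s + 1) / ((2 : ℝ) ^ (2 * N * s) * (Nat.factorial (2 * s + 1) : ℝ))
          - x ^ (4 * s + 2) /
              ((2 : ℝ) ^ ((N : ℤ) * (4 * s + 1) - 2) * (Nat.factorial (2 * s + 1) : ℝ) ^ 2))
        ≤ (∑ i ∈ Finset.range (2 * s + 1), (x / 2 ^ N) ^ i / (Nat.factorial i : ℝ)) ^ (2 ^ N) ∧
      (∑ i ∈ Finset.range (2 * s + 1), (x / 2 ^ N) ^ i / (Nat.factorial i : ℝ)) ^ (2 ^ N)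
        ≤ Real.exp x := by
  have h2N : (0 : ℝ) < 2 ^ N := by positivity
  set y : ℝ := x / 2 ^ N with hy
  have hy0 : 0 ≤ y := by positivity
  have hy1 : y ≤ 1 := by rw [hy, div_le_one h2N]; exact hx1
  have hxy : x = 2 ^ N * y := by rw [hy]; field_simp
  set T : ℝ := ∑ i ∈ Finset.range (2 * s + 1), y ^ i / (Nat.factorial i : ℝ) with hT
  set r : ℝ := y ^ (2 * s + 1) / (Nat.factorial (2 * s + 1) : ℝ) with hr
  have hF : (0 : ℝ) < (Nat.factorial (2 * s + 1) : ℝ) := by positivity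
  have hr0 : 0 ≤ r := by positivity
  have hr6 : r ≤ 1 / 6 := by
    rw [hr]
    have h1 : y ^ (2 * s + 1) ≤ 1 := pow_le_one₀ hy0 hy1
    have h2 : (6 : ℝ) ≤ (Nat.factorial (2 * s + 1) : ℝ) := by
      have h3 : Nat.factorial 3 ≤ Nat.factorial (2 * s + 1) := Nat.factorial_le (by omega)
      have h6 : (6 : ℕ) ≤ Nat.factorial (2 * s + 1) := by
        calc (6 : ℕ) = Nat.factorial 3 := by norm_num [Nat.factorial]
          _ ≤ _ := h3
      exact_mod_cast h6
    exact div_le_div₀ (by norm_num) h1 (by norm_num) h2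
  have hT0 : 0 ≤ T := by
    rw [hT]; apply Finset.sum_nonneg; intro i _; positivity
  have hTle : T ≤ Real.exp y := Real.sum_le_exp_of_nonneg hy0 _
  -- upper bound
  have hupper : T ^ (2 ^ N) ≤ Real.exp x := by
    calc T ^ (2 ^ N) ≤ (Real.exp y) ^ (2 ^ N) := pow_le_pow_left₀ hT0 hTle _
      _ = Real.exp x := by
          rw [← Real.exp_nat_mul, hxy]; push_cast; ring_nf
  -- lower bound
  have h1 : Real.exp y ≤ T + r * Real.exp y := exp_tail_bound (2 * s + 1) hy0 hy1
  have h2 : Real.exp (-(r + 4 * r ^ 2)) ≤ 1 - r := by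
    have hkey : 1 ≤ (1 - r) * Real.exp (r + 4 * r ^ 2) := by
      nlinarith [Real.add_one_le_exp (r + 4 * r ^ 2), sq_nonneg r]
    have hprod : Real.exp (-(r + 4 * r ^ 2)) * Real.exp (r + 4 * r ^ 2) = 1 := by
      rw [← Real.exp_add, neg_add_cancel, Real.exp_zero]
    nlinarith [Real.exp_pos (r + 4 * r ^ 2), Real.exp_pos (-(r + 4 * r ^ 2))]
  have h3 : Real.exp (y - (r + 4 * r ^ 2)) ≤ T := by
    have : Real.exp (y - (r + 4 * r ^ 2)) = Real.exp y * Real.exp (-(r + 4 * r ^ 2)) := by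
      rw [← Real.exp_add]; ring_nf
    rw [this]
    have hey : 0 < Real.exp y := Real.exp_pos _
    calc Real.exp y * Real.exp (-(r + 4 * r ^ 2)) ≤ Real.exp y * (1 - r) :=
          mul_le_mul_of_nonneg_left h2 hey.le
      _ ≤ T := by nlinarith
  have harg : x - x ^ (2 * s + 1) / ((2 : ℝ) ^ (2 * N * s) * (Nat.factorial (2 * s + 1) : ℝ))
          - x ^ (4 * s + 2) /
              ((2 : ℝ) ^ ((N : ℤ) * (4 * s + 1) - 2) * (Nat.factorial (2 * s + 1) : ℝ) ^ 2)
      = 2 ^ N * (y - (r + 4 * r ^ 2)) := by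
    have hz : (2 : ℝ) ^ ((N : ℤ) * (4 * s + 1) - 2) = (2 : ℝ) ^ (N * (4 * s + 1)) / 4 := by
      rw [zpow_sub₀ (two_ne_zero)]
      norm_num
      rw [show (N : ℤ) * (4 * (s : ℤ) + 1) = ((N * (4 * s + 1) : ℕ) : ℤ) by push_cast; ring,
        zpow_natCast]
    rw [hz, hxy, hr]
    have hp1 : (2 : ℝ) ^ (N * (4 * s + 1)) = 2 ^ (4 * N * s) * 2 ^ N := by
      rw [← pow_add]; ring_nf
    have hp2 : ((2:ℝ) ^ N * y) ^ (2 * s + 1) = 2 ^ (2 * N * s) * 2 ^ N * y ^ (2 * s + 1) := by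
      rw [mul_pow, ← pow_mul, ← pow_add]; ring_nf
    have hp3 : ((2:ℝ) ^ N * y) ^ (4 * s + 2) = 2 ^ (4 * N * s) * 2 ^ N * 2 ^ N * y ^ (4 * s + 2) := by
      rw [mul_pow, ← pow_mul, ← pow_add, ← pow_add]; ring_nf
    rw [hp1, hp2, hp3]
    have h2Ns : (0:ℝ) < 2 ^ (2 * N * s) := by positivity
    have h4Ns : (0:ℝ) < 2 ^ (4 * N * s) := by positivity
    field_simp
    ring
  have hlower : Real.exp (x - x ^ (2 * s + 1) / ((2 : ℝ) ^ (2 * N * s) * (Nat.factorial (2 * s + 1) : ℝ))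
          - x ^ (4 * s + 2) /
              ((2 : ℝ) ^ ((N : ℤ) * (4 * s + 1) - 2) * (Nat.factorial (2 * s + 1) : ℝ) ^ 2))
      ≤ T ^ (2 ^ N) := by
    rw [harg]
    calc Real.exp (2 ^ N * (y - (r + 4 * r ^ 2)))
        = (Real.exp (y - (r + 4 * r ^ 2))) ^ (2 ^ N) := by
          rw [← Real.exp_nat_mul]; push_cast; ring_nf
      _ ≤ T ^ (2 ^ N) := pow_le_pow_left₀ (Real.exp_pos _).le h3 _
  exact ⟨hlower, hupper⟩
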